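/- arXiv:2210.00816 — 2 statements merged into one kernel-verified Lean document; each statement's English description precedes it below -/
import Mathlib

section
/- For every positive natural number x, γ(x − f_{γ(x)}) ≤ γ(x) − 2, where γ(x) = max{ l : f_l ≤ x }. -/
noncomputable def gamma (x : ℕ) : ℕ := sSup {l : ℕ | Nat.fib l ≤ x}

lemma gamma_bdd (x : ℕ) : BddAbove {l : ℕ | Nat.fib l ≤ x} := by
  refine ⟨max x 5, fun l hl => ?_⟩
  rcases le_or_gt l 5 with h | h
  · exact le_max_of_le_right h
  · exact le_max_of_le_left ((Nat.le_fib_self h.le).trans hl)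

lemma gamma_ne (x : ℕ) : {l : ℕ | Nat.fib l ≤ x}.Nonempty :=
  ⟨0, by simp⟩

lemma fib_gamma_le (x : ℕ) : Nat.fib (gamma x) ≤ x :=
  Nat.sSup_mem (gamma_ne x) (gamma_bdd x)

lemma le_gamma {x l : ℕ} (h : Nat.fib l ≤ x) : l ≤ gamma x :=
  le_csSup (gamma_bdd x) h

lemma lt_fib_gamma_succ (x : ℕ) : x < Nat.fib (gamma x + 1) := by
  by_contra h
  push_neg at h
  have := le_gamma h
  omega

theorem gamma_drop (x : ℕ) (hx : 0 < x) :
    gamma (x - Nat.fib (gamma x)) ≤ gamma x - 2 := by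
  set g := gamma x with hg
  have hg2 : 2 ≤ g := le_gamma (by norm_num; omega)
  have hfib : Nat.fib (g - 1 + 2) = Nat.fib g + Nat.fib (g - 1) := by
    rw [Nat.fib_add_two, Nat.add_comm]
    congr 2
    omega
  have hx2 : x < Nat.fib g + Nat.fib (g - 1) := by
    have := lt_fib_gamma_succ x
    rw [← hg] at this
    have hgg : g + 1 = g - 1 + 2 := by omega
    rw [hgg, hfib] at this
    exact this
  refine csSup_le (gamma_ne _) fun l hl => ?_
  have hl' : Nat.fib l ≤ x - Nat.fib g := hl
  have h1 : Nat.fib l < Nat.fib (g - 1) := by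
    have := fib_gamma_le x
    rw [← hg] at this
    omega
  by_contra hc
  push_neg at hc
  have : Nat.fib (g - 1) ≤ Nat.fib l := Nat.fib_mono (by omega)
  omega
end

section
/- For a ≥ 2, the genus of S(a) satisfies 5·g(S(a)) = (a−2)·f_a + a·f_{a−2}; equivalently g(S(a)) = ((a−2)·f_a + a·f_{a−2})/5. -/
open Nat Finset

lemma succ_le_fib_add_two : ∀ n : ℕ, n + 1 ≤ Nat.fib (n + 2)
  | 0 => by decide
  | 1 => by decide
  | (n+2) => by
    have h1 : n + 1 ≤ Nat.fib (n+2) := succ_le_fib_add_two n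
    have h2 : n + 2 ≤ Nat.fib (n+3) := succ_le_fib_add_two (n+1)
    have h3 : Nat.fib (n+4) = Nat.fib (n+2) + Nat.fib (n+3) := Nat.fib_add_two
    show n + 3 ≤ Nat.fib (n + 4)
    omega

def maxFibIdx (n : ℕ) : ℕ := Nat.findGreatest (fun i => Nat.fib i ≤ n) (n + 1)

lemma fib_maxFibIdx_le (n : ℕ) : Nat.fib (maxFibIdx n) ≤ n :=
  Nat.findGreatest_spec (P := fun i => Nat.fib i ≤ n) (m := 0) (by omega) (by simp)

lemma two_le_maxFibIdx {n : ℕ} (h : 1 ≤ n) : 2 ≤ maxFibIdx n :=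
  Nat.le_findGreatest (by omega) (by simpa [Nat.fib_two] using h)

lemma lt_fib_maxFibIdx_succ (n : ℕ) : n < Nat.fib (maxFibIdx n + 1) := by
  by_contra hc
  push_neg at hc
  rcases le_or_gt (maxFibIdx n + 1) (n + 1) with h | h
  · exact Nat.findGreatest_is_greatest (P := fun i => Nat.fib i ≤ n)
      (Nat.lt_succ_self _) h hc
  · have h2 : n + 2 ≤ maxFibIdx n + 1 := by omega
    have h4 := succ_le_fib_add_two n
    have h5 := Nat.fib_mono h2
    omega

def z : ℕ → ℕ
  | 0 => 0
  | (n+1) => z ((n+1) - Nat.fib (maxFibIdx (n+1))) + 1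
termination_by n => n
decreasing_by
  have h2 : 2 ≤ maxFibIdx (n+1) := two_le_maxFibIdx (by omega)
  have : 0 < Nat.fib (maxFibIdx (n+1)) := Nat.fib_pos.mpr (by omega)
  omega

lemma z_zero : z 0 = 0 := by rw [z]

lemma z_eq {n : ℕ} (h : 0 < n) : z n = z (n - Nat.fib (maxFibIdx n)) + 1 := by
  rcases n with _ | n
  · omega
  · rw [z]

lemma maxFibIdx_spec {n M : ℕ} (h2 : 2 ≤ M) (h : Nat.fib M ≤ n) (h' : n < Nat.fib (M + 1)) :
    maxFibIdx n = M := by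
  have hn : 1 ≤ n := le_trans (Nat.fib_pos.mpr (by omega)) h
  have hM2 := two_le_maxFibIdx hn
  have hle := fib_maxFibIdx_le n
  have hlt := lt_fib_maxFibIdx_succ n
  by_contra hne
  rcases lt_or_gt_of_ne hne with hlt2 | hlt2
  · have := Nat.fib_mono (show maxFibIdx n + 1 ≤ M by omega)
    omega
  · have := Nat.fib_mono (show M + 1 ≤ maxFibIdx n by omega)
    omega

lemma z_fib_add {m s : ℕ} (h : s < Nat.fib (m + 1)) :
    z (Nat.fib (m + 2) + s) = z s + 1 := by
  have hpos : 0 < Nat.fib (m + 2) := Nat.fib_pos.mpr (by omega)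
  have h3 : Nat.fib (m + 3) = Nat.fib (m+1) + Nat.fib (m+2) := Nat.fib_add_two
  have hidx : maxFibIdx (Nat.fib (m + 2) + s) = m + 2 := by
    apply maxFibIdx_spec (by omega) (by omega)
    show Nat.fib (m + 2) + s < Nat.fib (m + 3)
    omega
  rw [z_eq (by omega), hidx]
  congr 2
  omega

lemma z_decomp {n : ℕ} (h : 0 < n) :
    ∃ m, Nat.fib (m + 2) ≤ n ∧ n < Nat.fib (m + 3) ∧ n - Nat.fib (m + 2) < Nat.fib (m + 1) ∧
      z n = z (n - Nat.fib (m + 2)) + 1 := by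
  obtain ⟨M, hM2, h1, h2⟩ : ∃ M, 2 ≤ M ∧ Nat.fib M ≤ n ∧ n < Nat.fib (M + 1) :=
    ⟨maxFibIdx n, two_le_maxFibIdx h, fib_maxFibIdx_le n, lt_fib_maxFibIdx_succ n⟩
  have hz : z n = z (n - Nat.fib M) + 1 := by
    rw [z_eq h, maxFibIdx_spec hM2 h1 h2]
  have h3 : Nat.fib (M + 1) = Nat.fib (M - 1) + Nat.fib M := by
    rw [show M + 1 = (M - 1) + 2 by omega, Nat.fib_add_two, show M - 1 + 1 = M by omega]
  refine ⟨M - 2, ?_, ?_, ?_, ?_⟩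
  · rw [show M - 2 + 2 = M by omega]; exact h1
  · rw [show M - 2 + 3 = M + 1 by omega]; exact h2
  · rw [show M - 2 + 2 = M by omega, show M - 2 + 1 = M - 1 by omega]; omega
  · rw [show M - 2 + 2 = M by omega]; exact hz

lemma z_fib_le_one (b : ℕ) : z (Nat.fib b) ≤ 1 := by
  rcases b with _ | _ | b
  · simp [z_zero]
  · have : z (Nat.fib 2 + 0) = z 0 + 1 := z_fib_add (by decide)
    simpa [z_zero] using this.le
  · have : z (Nat.fib (b + 2) + 0) = z 0 + 1 := z_fib_add (Nat.fib_pos.mpr (by omega))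
    simpa [z_zero] using this.le

lemma z_main : ∀ u : ℕ, (∀ b, z (u + Nat.fib b) ≤ z u + 1) ∧
    (∀ c b, b ≤ c → u < Nat.fib c → z (Nat.fib b + u - Nat.fib c) ≤ z u + 1) := by
  intro u
  induction u using Nat.strong_induction_on with
  | _ u IH =>
  rcases Nat.eq_zero_or_pos u with rfl | hu
  · constructor
    · intro b; simpa [z_zero] using z_fib_le_one b
    · intro c b hbc _
      have : Nat.fib b ≤ Nat.fib c := Nat.fib_mono hbc
      rw [show Nat.fib b + 0 - Nat.fib c = 0 by omega, z_zero]
      omega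
  obtain ⟨m, hfib, hub, hr, hz⟩ := z_decomp hu
  set r := u - Nat.fib (m + 2) with hrdef
  have hfp : 0 < Nat.fib (m+2) := Nat.fib_pos.mpr (by omega)
  have hur : u = Nat.fib (m + 2) + r := by omega
  have hrlt : r < u := by omega
  have e1 : Nat.fib (m+2) = Nat.fib m + Nat.fib (m+1) := Nat.fib_add_two
  have e2 : Nat.fib (m+3) = Nat.fib (m+1) + Nat.fib (m+2) := Nat.fib_add_two (n := m+1)
  have e3 : Nat.fib (m+4) = Nat.fib (m+2) + Nat.fib (m+3) := Nat.fib_add_two (n := m+2)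
  constructor
  · intro b
    rcases lt_or_ge b (m + 2) with hb | hb
    · -- b ≤ m+1
      have hble : Nat.fib b ≤ Nat.fib (m+1) := Nat.fib_mono (by omega)
      rcases lt_or_ge (r + Nat.fib b) (Nat.fib (m+1)) with hw | hw
      · have key : z (u + Nat.fib b) = z (r + Nat.fib b) + 1 := by
          rw [show u + Nat.fib b = Nat.fib (m+2) + (r + Nat.fib b) by omega]
          exact z_fib_add (m := m) hw
        have h2 := (IH r hrlt).1 b
        omega
      · have key : z (u + Nat.fib b) = z (Nat.fib b + r - Nat.fib (m+1)) + 1 := by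
          rw [show u + Nat.fib b = Nat.fib (m+3) + (Nat.fib b + r - Nat.fib (m+1)) by omega]
          exact z_fib_add (m := m+1) (by show _ < Nat.fib (m+2); omega)
        have h2 := (IH r hrlt).2 (m+1) b (by omega) hr
        omega
    rcases eq_or_lt_of_le hb with hb2 | hb2
    · -- b = m+2
      have key : z (u + Nat.fib b) = z (Nat.fib m + r) + 1 := by
        rw [← hb2, show u + Nat.fib (m+2) = Nat.fib (m+3) + (Nat.fib m + r) by omega]
        exact z_fib_add (m := m+1) (by show _ < Nat.fib (m+2); omega)
      have h2 := (IH r hrlt).1 m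
      rw [show r + Nat.fib m = Nat.fib m + r by omega] at h2
      omega
    rcases eq_or_lt_of_le (show m + 2 + 1 ≤ b from hb2) with hb3 | hb3
    · -- b = m+3
      have key : z (u + Nat.fib b) = z r + 1 := by
        rw [← hb3, show u + Nat.fib (m+3) = Nat.fib (m+4) + r by omega]
        exact z_fib_add (m := m+2) (by show _ < Nat.fib (m+3); omega)
      omega
    · -- b ≥ m+4
      have key : z (u + Nat.fib b) = z u + 1 := by
        rw [show u + Nat.fib b = Nat.fib b + u by omega,
          show b = (b - 2) + 2 by omega]
        exact z_fib_add (m := b - 2)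
          (lt_of_lt_of_le hub (Nat.fib_mono (by omega)))
      omega
  · intro c b hbc huc
    rcases le_or_gt (Nat.fib b + u) (Nat.fib c) with hle | hgt
    · rw [Nat.sub_eq_zero_of_le hle, z_zero]; omega
    have hfbc : Nat.fib b ≤ Nat.fib c := Nat.fib_mono hbc
    rcases eq_or_lt_of_le hfbc with heq | hlt
    · rw [show Nat.fib b + u - Nat.fib c = u by omega]; omega
    have hc3 : 3 ≤ c := by
      by_contra hc
      have h9 : Nat.fib c ≤ Nat.fib 2 := Nat.fib_mono (by omega)
      rw [Nat.fib_two] at h9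
      omega
    obtain ⟨k, rfl⟩ : ∃ k, c = k + 3 := ⟨c - 3, by omega⟩
    have f1 : Nat.fib (k+3) = Nat.fib (k+1) + Nat.fib (k+2) := Nat.fib_add_two (n := k+1)
    have f0 : Nat.fib (k+2) = Nat.fib k + Nat.fib (k+1) := Nat.fib_add_two
    have hbk : Nat.fib b ≤ Nat.fib (k+2) := by
      have hbb : b ≤ k + 2 := by
        by_contra hbb
        have := Nat.fib_mono (show k + 3 ≤ b by omega)
        omega
      exact Nat.fib_mono hbb
    have hm1 : m + 2 < k + 3 := by
      by_contra hmm
      have := Nat.fib_mono (show k + 3 ≤ m + 2 by omega)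
      omega
    have hm2 : k + 1 < m + 3 := by
      by_contra hmm
      have := Nat.fib_mono (show m + 3 ≤ k + 1 by omega)
      omega
    rcases (show m = k ∨ k = m + 1 by omega) with rfl | hk
    · rcases eq_or_lt_of_le hbk with hbeq | hblt
      · have hveq : Nat.fib b + u - Nat.fib (m+3) = Nat.fib m + r := by omega
        have h2 := (IH r hrlt).1 m
        rw [show r + Nat.fib m = Nat.fib m + r by omega] at h2
        rw [hveq]
        omega
      · have hb2 : b ≤ m + 1 := by
          by_contra hbb
          have := Nat.fib_mono (show m + 2 ≤ b by omega)
          omega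
        have h2 := (IH r hrlt).2 (m+1) b hb2 hr
        have hveq : Nat.fib b + u - Nat.fib (m+3) = Nat.fib b + r - Nat.fib (m+1) := by omega
        rw [hveq]
        omega
    · have g3 : Nat.fib (k+3) = Nat.fib (m+2) + Nat.fib (m+3) := by rw [hk]; exact e3
      have g2 : Nat.fib (k+2) = Nat.fib (m+1) + Nat.fib (m+2) := by rw [hk]; exact e2
      rcases eq_or_lt_of_le hbk with hbeq | hblt
      · have hveq : Nat.fib b + u - Nat.fib (k+3) = r := by omega
        rw [hveq]
        omega
      · have hb2 : Nat.fib b ≤ Nat.fib (m+2) := by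
          have hbb : b ≤ m + 2 := by
            by_contra hbb
            have h8 : Nat.fib (k+2) ≤ Nat.fib b := by
              rw [hk]
              exact Nat.fib_mono (show m + 1 + 2 ≤ b by omega)
            omega
          exact Nat.fib_mono hbb
        have hv0 : Nat.fib b + u - Nat.fib (k+3) = 0 := by omega
        rw [hv0, z_zero]
        omega

lemma z_add_fib (u b : ℕ) : z (u + Nat.fib b) ≤ z u + 1 := (z_main u).1 b

lemma z_subadd : ∀ v u : ℕ, z (u + v) ≤ z u + z v := by
  intro v
  induction v using Nat.strong_induction_on with
  | _ v IH =>
  intro u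
  rcases Nat.eq_zero_or_pos v with rfl | hv
  · simp [z_zero]
  obtain ⟨m, hfib, hvb, hr, hz⟩ := z_decomp hv
  have hfp : 0 < Nat.fib (m+2) := Nat.fib_pos.mpr (by omega)
  have h1 : z (u + (v - Nat.fib (m+2)) + Nat.fib (m+2)) ≤ z (u + (v - Nat.fib (m+2))) + 1 :=
    z_add_fib _ (m+2)
  have h2 := IH (v - Nat.fib (m+2)) (by omega) u
  rw [show u + v = u + (v - Nat.fib (m+2)) + Nat.fib (m+2) by omega]
  omega

/-- reduction by fib a for values in [fib a, 2 fib a) -/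
lemma z_sub_fib {a w : ℕ} (ha : 2 ≤ a) (h1 : Nat.fib a ≤ w) (h2 : w < 2 * Nat.fib a) :
    z (w - Nat.fib a) ≤ z w := by
  have hfa : 0 < Nat.fib a := Nat.fib_pos.mpr (by omega)
  obtain ⟨m, hfib, hwb, hr, hz⟩ := z_decomp (show 0 < w by omega)
  obtain ⟨a', rfl⟩ : ∃ a', a = a' + 2 := ⟨a - 2, by omega⟩
  have ea : Nat.fib (a'+2) = Nat.fib a' + Nat.fib (a'+1) := Nat.fib_add_two
  have ea2 : Nat.fib (a'+3) = Nat.fib (a'+1) + Nat.fib (a'+2) := Nat.fib_add_two (n := a'+1)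
  have ea3 : Nat.fib (a'+4) = Nat.fib (a'+2) + Nat.fib (a'+3) := Nat.fib_add_two (n := a'+2)
  -- m+2 = a'+2 or m+2 = a'+3
  have hm1 : a' + 2 ≤ m + 2 := by
    by_contra hmm
    have := Nat.fib_mono (show m + 3 ≤ a' + 2 by omega)
    omega
  have hm2 : m + 2 < a' + 4 := by
    by_contra hmm
    have := Nat.fib_mono (show a' + 4 ≤ m + 2 by omega)
    omega
  rcases (show m = a' ∨ m = a' + 1 by omega) with rfl | hk
  · rw [show w - Nat.fib (m+2) = w - Nat.fib (m+2) from rfl]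
    omega
  · -- w = fib(a'+3) + r with r < fib a'
    have g2 : Nat.fib (m+2) = Nat.fib (a'+3) := by rw [hk]
    have g1 : Nat.fib (m+1) = Nat.fib (a'+2) := by rw [hk]
    rcases Nat.eq_zero_or_pos a' with rfl | ha'
    · have c1 : Nat.fib (0+2) = 1 := by decide
      have c2 : Nat.fib (0+3) = 2 := by decide
      omega
    obtain ⟨q, rfl⟩ : ∃ q, a' = q + 1 := ⟨a' - 1, by omega⟩
    simp only [show q+1+1 = q+2 from rfl, show q+1+2 = q+3 from rfl,
      show q+1+3 = q+4 from rfl, show q+1+4 = q+5 from rfl] at *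
    have hrs : w - Nat.fib (q+3) = Nat.fib (q+2) + (w - Nat.fib (m+2)) := by omega
    have hkey : z (w - Nat.fib (q+3)) = z (w - Nat.fib (m+2)) + 1 := by
      rw [hrs]
      refine z_fib_add (m := q) ?_
      show w - Nat.fib (m+2) < Nat.fib (q+1)
      omega
    omega

def S (a : ℕ) : AddSubmonoid ℕ :=
  AddSubmonoid.closure {m : ℕ | ∃ n : ℕ, m = Nat.fib a + Nat.fib n}

def T (a : ℕ) (ha : 2 ≤ a) : AddSubmonoid ℕ where
  carrier := {m : ℕ | z (m % Nat.fib a) ≤ m / Nat.fib a}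
  zero_mem' := by simp [z_zero]
  add_mem' := by
    intro m1 m2 h1 h2
    simp only [Set.mem_setOf_eq] at *
    have hf : 0 < Nat.fib a := Nat.fib_pos.mpr (by omega)
    have d1 := Nat.div_add_mod m1 (Nat.fib a)
    have d2 := Nat.div_add_mod m2 (Nat.fib a)
    have ht1 : m1 % Nat.fib a < Nat.fib a := Nat.mod_lt _ hf
    have ht2 : m2 % Nat.fib a < Nat.fib a := Nat.mod_lt _ hf
    have hsub := z_subadd (m2 % Nat.fib a) (m1 % Nat.fib a)
    rcases lt_or_ge (m1 % Nat.fib a + m2 % Nat.fib a) (Nat.fib a) with hlt | hge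
    · have hmeq : m1 + m2 = Nat.fib a * (m1 / Nat.fib a + m2 / Nat.fib a) +
          (m1 % Nat.fib a + m2 % Nat.fib a) := by
        rw [Nat.mul_add]; omega
      rw [hmeq, Nat.mul_add_mod, Nat.mod_eq_of_lt hlt, Nat.mul_add_div hf,
        Nat.div_eq_of_lt hlt]
      omega
    · have hmeq : m1 + m2 = Nat.fib a * (m1 / Nat.fib a + m2 / Nat.fib a + 1) +
          (m1 % Nat.fib a + m2 % Nat.fib a - Nat.fib a) := by
        rw [Nat.mul_add, Nat.mul_add, Nat.mul_one]; omega
      have hlt2 : m1 % Nat.fib a + m2 % Nat.fib a - Nat.fib a < Nat.fib a := by omega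
      have hzs : z (m1 % Nat.fib a + m2 % Nat.fib a - Nat.fib a) ≤
          z (m1 % Nat.fib a + m2 % Nat.fib a) :=
        z_sub_fib ha hge (by omega)
      rw [hmeq, Nat.mul_add_mod, Nat.mod_eq_of_lt hlt2, Nat.mul_add_div hf,
        Nat.div_eq_of_lt hlt2]
      omega

lemma fib_mem_T {a : ℕ} (ha : 2 ≤ a) : ∀ j, Nat.fib (a + j) ∈ T a ha := by
  have hf : 0 < Nat.fib a := Nat.fib_pos.mpr (by omega)
  intro j
  induction j using Nat.strong_induction_on with
  | _ j IH =>
  show z (Nat.fib (a + j) % Nat.fib a) ≤ Nat.fib (a + j) / Nat.fib a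
  rcases j with _ | _ | j
  · simp [Nat.mod_self, z_zero]
  · -- fib (a+1)
    obtain ⟨a', rfl⟩ : ∃ a', a = a' + 2 := ⟨a - 2, by omega⟩
    show z (Nat.fib (a'+3) % Nat.fib (a'+2)) ≤ Nat.fib (a'+3) / Nat.fib (a'+2)
    have e1 : Nat.fib (a' + 3) = Nat.fib (a'+1) + Nat.fib (a'+2) := Nat.fib_add_two (n := a'+1)
    rcases Nat.eq_zero_or_pos a' with rfl | ha'
    · simp [show Nat.fib (0+3) = 2 by decide, show Nat.fib (0+2) = 1 by decide,
        Nat.mod_one, z_zero]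
    · have hlt : Nat.fib (a'+1) < Nat.fib (a'+2) := Nat.fib_lt_fib_succ (by omega)
      have hmod : Nat.fib (a'+3) % Nat.fib (a'+2) = Nat.fib (a'+1) := by
        rw [e1, Nat.add_mod_right, Nat.mod_eq_of_lt hlt]
      have hdiv : 1 ≤ Nat.fib (a'+3) / Nat.fib (a'+2) :=
        (Nat.one_le_div_iff hf).mpr (by omega)
      rw [hmod]
      have := z_fib_le_one (a'+1)
      omega
  · -- j + 2
    have e : Nat.fib (a + (j+2)) = Nat.fib (a + j) + Nat.fib (a + j + 1) := by
      rw [show a + (j + 2) = (a + j) + 2 by omega]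
      exact Nat.fib_add_two
    have h1 := IH j (by omega)
    have h2 := IH (j+1) (by omega)
    rw [show a + (j + 1) = a + j + 1 by omega] at h2
    have hsum : Nat.fib (a + j) + Nat.fib (a + j + 1) ∈ T a ha := add_mem h1 h2
    rw [show (Nat.fib (a+(j+2)) % Nat.fib a) = (Nat.fib (a+j) + Nat.fib (a+j+1)) % Nat.fib a by rw [e],
      show (Nat.fib (a+(j+2)) / Nat.fib a) = (Nat.fib (a+j) + Nat.fib (a+j+1)) / Nat.fib a by rw [e]]
    exact hsum

lemma gen_mem_T {a : ℕ} (ha : 2 ≤ a) (n : ℕ) : Nat.fib a + Nat.fib n ∈ T a ha := by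
  have hf : 0 < Nat.fib a := Nat.fib_pos.mpr (by omega)
  induction n using Nat.strong_induction_on with
  | _ n IH =>
  show z ((Nat.fib a + Nat.fib n) % Nat.fib a) ≤ (Nat.fib a + Nat.fib n) / Nat.fib a
  rcases eq_or_lt_of_le (show 1 ≤ Nat.fib a by omega) with hfa1 | hfa2
  · rw [← hfa1, Nat.mod_one]
    simp [z_zero]
  rcases lt_or_ge (Nat.fib n) (Nat.fib a) with hlt | hge
  · have hmod : (Nat.fib a + Nat.fib n) % Nat.fib a = Nat.fib n := by
      rw [Nat.add_comm, Nat.add_mod_right, Nat.mod_eq_of_lt hlt]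
    have hdiv : 1 ≤ (Nat.fib a + Nat.fib n) / Nat.fib a :=
      (Nat.one_le_div_iff hf).mpr (by omega)
    rw [hmod]
    have := z_fib_le_one n
    omega
  · -- fib a ≤ fib n, fib a ≥ 2
    obtain ⟨a', rfl⟩ : ∃ a', a = a' + 2 := ⟨a - 2, by omega⟩
    have hna : a' + 2 ≤ n := by
      by_contra hc
      rcases Nat.eq_zero_or_pos a' with rfl | ha'
      · simp [show Nat.fib (0+2) = 1 by decide] at hfa2
      · have h5 : Nat.fib n ≤ Nat.fib (a' + 1) := Nat.fib_mono (by omega)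
        have h6 : Nat.fib (a'+1) < Nat.fib (a'+2) := Nat.fib_lt_fib_succ (by omega)
        omega
    have ha1 : 1 ≤ a' := by
      rcases Nat.eq_zero_or_pos a' with rfl | ha'
      · simp [show Nat.fib (0+2) = 1 by decide] at hfa2
      · exact ha'
    have e1 : Nat.fib (a' + 3) = Nat.fib (a'+1) + Nat.fib (a'+2) := Nat.fib_add_two (n := a'+1)
    have hlt1 : Nat.fib (a'+1) < Nat.fib (a'+2) := Nat.fib_lt_fib_succ (by omega)
    rcases eq_or_lt_of_le hna with heq | hgt
    · -- n = a
      have hmod : (Nat.fib (a'+2) + Nat.fib (a'+2)) % Nat.fib (a'+2) = 0 := by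
        rw [Nat.add_mod_right, Nat.mod_self]
      rw [← heq, hmod]
      simp [z_zero]
    rcases eq_or_lt_of_le (show a' + 3 ≤ n by omega) with heq1 | hgt1
    · -- n = a + 1
      have hmm : Nat.fib (a'+2) + Nat.fib n =
          Nat.fib (a'+1) + Nat.fib (a'+2) + Nat.fib (a'+2) := by
        rw [← heq1]; omega
      have hmod : (Nat.fib (a'+1) + Nat.fib (a'+2) + Nat.fib (a'+2)) % Nat.fib (a'+2)
          = Nat.fib (a'+1) := by
        rw [Nat.add_mod_right, Nat.add_mod_right, Nat.mod_eq_of_lt hlt1]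
      have hdiv : 2 ≤ (Nat.fib (a'+1) + Nat.fib (a'+2) + Nat.fib (a'+2)) / Nat.fib (a'+2) :=
        (Nat.le_div_iff_mul_le hf).mpr (by omega)
      rw [hmm, hmod]
      have := z_fib_le_one (a'+1)
      omega
    · -- n ≥ a + 2
      obtain ⟨n', rfl⟩ : ∃ n', n = n' + 2 := ⟨n - 2, by omega⟩
      have e : Nat.fib (n'+2) = Nat.fib n' + Nat.fib (n'+1) := Nat.fib_add_two
      have h1 : Nat.fib (a'+2) + Nat.fib (n'+1) ∈ T (a'+2) ha := IH (n'+1) (by omega)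
      have h2 : Nat.fib n' ∈ T (a'+2) ha := by
        have h7 := fib_mem_T ha (n' - (a'+2))
        rw [show a'+2 + (n' - (a'+2)) = n' by omega] at h7
        exact h7
      have h3 := add_mem h1 h2
      rw [show Nat.fib (a'+2) + Nat.fib (n'+1) + Nat.fib n'
        = Nat.fib (a'+2) + Nat.fib (n'+2) by omega] at h3
      exact h3

lemma exists_rep : ∀ t : ℕ, ∃ l : List ℕ, (l.map Nat.fib).sum = t ∧ l.length = z t := by
  intro t
  induction t using Nat.strong_induction_on with
  | _ t IH =>
  rcases Nat.eq_zero_or_pos t with rfl | ht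
  · exact ⟨[], by simp, by simp [z_zero]⟩
  obtain ⟨m, hfib, htb, hr, hz⟩ := z_decomp ht
  have hfp : 0 < Nat.fib (m+2) := Nat.fib_pos.mpr (by omega)
  obtain ⟨l, hs, hl⟩ := IH (t - Nat.fib (m+2)) (by omega)
  refine ⟨(m+2) :: l, ?_, ?_⟩
  · simp only [List.map_cons, List.sum_cons, hs]
    omega
  · simp only [List.length_cons, hl]
    omega

lemma sum_map_const_add (c : ℕ) : ∀ l : List ℕ,
    (l.map (fun p => c + Nat.fib p)).sum = l.length * c + (l.map Nat.fib).sum := by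
  intro l
  induction l with
  | nil => simp
  | cons x xs ih =>
    simp only [List.map_cons, List.sum_cons, List.length_cons, ih]
    ring

lemma mem_S_iff {a : ℕ} (ha : 2 ≤ a) (m : ℕ) :
    m ∈ S a ↔ z (m % Nat.fib a) ≤ m / Nat.fib a := by
  have hf : 0 < Nat.fib a := Nat.fib_pos.mpr (by omega)
  constructor
  · intro hm
    have hle : S a ≤ T a ha := by
      rw [S, AddSubmonoid.closure_le]
      rintro x ⟨n, rfl⟩
      exact gen_mem_T ha n
    exact hle hm
  · intro hm
    obtain ⟨l, hs, hl⟩ := exists_rep (m % Nat.fib a)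
    have hgen : ∀ p, Nat.fib a + Nat.fib p ∈ S a := fun p =>
      AddSubmonoid.subset_closure ⟨p, rfl⟩
    have hfa : Nat.fib a ∈ S a := by
      have h0 := hgen 0
      simpa using h0
    have hsum : (l.map (fun p => Nat.fib a + Nat.fib p)).sum ∈ S a := by
      apply AddSubmonoid.list_sum_mem
      intro x hx
      simp only [List.mem_map] at hx
      obtain ⟨p, _, rfl⟩ := hx
      exact hgen p
    have hmul : ∀ j : ℕ, j * Nat.fib a ∈ S a := by
      intro j
      induction j with
      | zero => simpa using (S a).zero_mem
      | succ i ihh =>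
        rw [Nat.succ_mul]
        exact add_mem ihh hfa
    have hk : l.length ≤ m / Nat.fib a := by rw [hl]; exact hm
    have hmeq : m = (l.map (fun p => Nat.fib a + Nat.fib p)).sum +
        (m / Nat.fib a - l.length) * Nat.fib a := by
      have h0 : Nat.fib a * (m / Nat.fib a) + m % Nat.fib a = m := Nat.div_add_mod m (Nat.fib a)
      rw [sum_map_const_add, hs]
      have h1 : m / Nat.fib a = l.length + (m / Nat.fib a - l.length) := by omega
      calc m = Nat.fib a * (m / Nat.fib a) + m % Nat.fib a := h0.symm
        _ = Nat.fib a * (l.length + (m / Nat.fib a - l.length)) + m % Nat.fib a := by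
            rw [← h1]
        _ = l.length * Nat.fib a + m % Nat.fib a +
            (m / Nat.fib a - l.length) * Nat.fib a := by ring
    rw [hmeq]
    exact add_mem hsum (hmul _)

lemma gap_card {a : ℕ} (ha : 2 ≤ a) :
    {m : ℕ | m ∉ S a}.ncard = ∑ t ∈ Finset.range (Nat.fib a), z t := by
  classical
  have hf : 0 < Nat.fib a := Nat.fib_pos.mpr (by omega)
  have hset : {m : ℕ | m ∉ S a} =
      ↑(((Finset.range (Nat.fib a)).sigma (fun t => Finset.range (z t))).image
        (fun p => Nat.fib a * p.2 + p.1)) := by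
    ext m
    simp only [Set.mem_setOf_eq, Finset.coe_image, Set.mem_image, Finset.mem_coe,
      Finset.mem_sigma, Finset.mem_range]
    rw [mem_S_iff ha m]
    constructor
    · intro h
      push_neg at h
      exact ⟨⟨m % Nat.fib a, m / Nat.fib a⟩, ⟨Nat.mod_lt _ hf, h⟩, Nat.div_add_mod m (Nat.fib a)⟩
    · rintro ⟨⟨t, k⟩, ⟨ht, hk⟩, rfl⟩
      rw [Nat.mul_add_mod, Nat.mod_eq_of_lt ht, Nat.mul_add_div hf, Nat.div_eq_of_lt ht]
      omega
  rw [hset, Set.ncard_coe_finset, Finset.card_image_of_injOn, Finset.card_sigma]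
  · simp
  · rintro ⟨t1, k1⟩ h1 ⟨t2, k2⟩ h2 heq
    simp only [Finset.coe_sigma, Set.mem_sigma_iff, Finset.mem_coe, Finset.mem_range] at h1 h2
    simp only at heq
    have ht1 : t1 < Nat.fib a := h1.1
    have ht2 : t2 < Nat.fib a := h2.1
    have hmm1 : (Nat.fib a * k1 + t1) % Nat.fib a = t1 := by
      rw [Nat.mul_add_mod, Nat.mod_eq_of_lt ht1]
    have hmm2 : (Nat.fib a * k2 + t2) % Nat.fib a = t2 := by
      rw [Nat.mul_add_mod, Nat.mod_eq_of_lt ht2]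
    have hdd1 : (Nat.fib a * k1 + t1) / Nat.fib a = k1 := by
      rw [Nat.mul_add_div hf, Nat.div_eq_of_lt ht1]
      omega
    have hdd2 : (Nat.fib a * k2 + t2) / Nat.fib a = k2 := by
      rw [Nat.mul_add_div hf, Nat.div_eq_of_lt ht2]
      omega
    have et : t1 = t2 := by rw [← hmm1, ← hmm2, heq]
    have ek : k1 = k2 := by rw [← hdd1, ← hdd2, heq]
    subst et
    subst ek
    rfl

lemma sum_z_rec (n : ℕ) : ∑ t ∈ Finset.range (Nat.fib (n+3)), z t =
    (∑ t ∈ Finset.range (Nat.fib (n+2)), z t) +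
    (∑ t ∈ Finset.range (Nat.fib (n+1)), z t) + Nat.fib (n+1) := by
  have e : Nat.fib (n+3) = Nat.fib (n+2) + Nat.fib (n+1) := by
    have h := Nat.fib_add_two (n := n+1)
    rw [show n+1+2 = n+3 from rfl, show n+1+1 = n+2 from rfl] at h
    omega
  rw [e, Finset.sum_range_add]
  have hcong : ∀ i ∈ Finset.range (Nat.fib (n+1)), z (Nat.fib (n+2) + i) = z i + 1 := by
    intro i hi
    rw [Finset.mem_range] at hi
    exact z_fib_add hi
  rw [Finset.sum_congr rfl hcong, Finset.sum_add_distrib]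
  simp [Finset.card_range]
  omega

lemma sum_z_closed : ∀ b : ℕ, 5 * (∑ t ∈ Finset.range (Nat.fib (b+2)), z t) =
    b * Nat.fib (b+2) + (b+2) * Nat.fib b := by
  intro b
  induction b using Nat.strong_induction_on with
  | _ b IH =>
  rcases b with _ | _ | b
  · -- b = 0
    simp [show Nat.fib (0+2) = 1 by decide, z_zero]
  · -- b = 1
    have h1 : z 1 = 1 := by
      have := z_fib_add (m := 0) (s := 0) (by decide)
      simpa [z_zero] using this
    rw [show Nat.fib (1+2) = 2 by decide]
    rw [show Finset.range 2 = {0, 1} by decide]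
    simp [z_zero, h1, Nat.fib_one]
  · -- b + 2
    have h1 := IH (b+1) (by omega)
    have h2 := IH b (by omega)
    have hrec := sum_z_rec (b+1)
    have e2 : Nat.fib (b+2) = Nat.fib b + Nat.fib (b+1) := Nat.fib_add_two
    have e3 : Nat.fib (b+3) = Nat.fib (b+1) + Nat.fib (b+2) := Nat.fib_add_two (n := b+1)
    have e4 : Nat.fib (b+4) = Nat.fib (b+2) + Nat.fib (b+3) := Nat.fib_add_two (n := b+2)
    show 5 * (∑ t ∈ Finset.range (Nat.fib (b+4)), z t) =
      (b+2) * Nat.fib (b+4) + (b+2+2) * Nat.fib (b+2)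
    rw [show b+1+3 = b+4 from rfl, show b+1+2 = b+3 from rfl] at hrec
    rw [hrec]
    -- everything linear in atoms b*fib i? products with b: use nlinarith-free approach:
    -- expand fibs in terms of F0 = fib b, F1 = fib (b+1)
    have hh : 5 * ((∑ t ∈ Finset.range (Nat.fib (b+3)), z t) +
        (∑ t ∈ Finset.range (Nat.fib (b+2)), z t) + Nat.fib (b+2)) =
        5 * (∑ t ∈ Finset.range (Nat.fib (b+3)), z t) +
        5 * (∑ t ∈ Finset.range (Nat.fib (b+2)), z t) + 5 * Nat.fib (b+2) := by ring
    rw [hh, h1, h2]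
    rw [show b+1+2 = b+3 from rfl]
    rw [e4, e3, e2]
    ring

theorem genus_S_closed_form (a : ℕ) (ha : 2 ≤ a) :
    5 * {m : ℕ | m ∉ S a}.ncard =
      (a - 2) * Nat.fib a + a * Nat.fib (a - 2) := by
  obtain ⟨b, rfl⟩ : ∃ b, a = b + 2 := ⟨a - 2, by omega⟩
  rw [gap_card ha, sum_z_closed b]
  rw [show b + 2 - 2 = b by omega]
end
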